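/- For k ≥ 2 and j ∈ [1, n-k], the element s_{β_{k-1}} s_{β_k} ⋯ s_{β_{i-1}}(β_i), where i = a_k + j, equals the positive root Σ_{u=n-k-j+1}^{n-k} α_u + 2 Σ_{u=n-k+1}^{n-2} α_u + α_{n-1} + α_n (the middle sum being empty when k = 2). -/

import Mathlib

noncomputable section

namespace SpinorDn

open Finset

/-- Euclidean dot product on `Fin n → ℝ`. -/
def dot {n : ℕ} (v w : Fin n → ℝ) : ℝ := ∑ u, v u * w u

/-- Orthogonal reflection in the root `β` (for `D_n` all roots have squared length `2`). -/
def sRefl {n : ℕ} (β : Fin n → ℝ) (v : Fin n → ℝ) : Fin n → ℝ :=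
  v - (2 * dot v β / dot β β) • β

/-- Standard basis vector `e_i` (0-indexed). -/
def stdE {n : ℕ} (i : ℕ) : Fin n → ℝ := fun u => if (u : ℕ) = i then 1 else 0

/-- Bourbaki simple roots of the root system `D_n`, indexed by `m ∈ [1,n]`:
`α_m = e_m - e_{m+1}` for `m < n` and `α_n = e_{n-1} + e_n` (1-indexed). -/
def simpleRoot (n m : ℕ) : Fin n → ℝ :=
  if m < n then stdE (m-1) - stdE m else stdE (n-2) + stdE (n-1)

/-- `a_k = (k-1)(2n-k)/2`. -/
def aval (n k : ℕ) : ℕ := (k-1)*(2*n-k)/2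

/-- For `i ∈ [1, n(n-1)/2]`, the unique `k` with `a_k < i ≤ a_{k+1}`. -/
def kOf (n i : ℕ) : ℕ := ((Finset.Icc 1 n).filter (fun k => aval n k < i)).card

/-- For `i = a_k + j`, the index `j`. -/
def jOf (n i : ℕ) : ℕ := i - aval n (kOf n i)

/-- Bourbaki index of the simple root `β_i` of the fixed reduced decomposition:
for `i = a_k + j` (`j ∈ [1, n-k]`), `β_i = α_{n-j}` if `j ≥ 2`, `β_i = α_n` if
`j = 1` and `n-k` is odd, and `β_i = α_{n-1}` if `j = 1` and `n-k` is even. -/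
def betaIdx (n i : ℕ) : ℕ :=
  if 2 ≤ jOf n i then n - jOf n i
  else if (n - kOf n i) % 2 = 1 then n else n - 1

/-- The simple root `β_i`. -/
def beta (n i : ℕ) : Fin n → ℝ := simpleRoot n (betaIdx n i)

/-- `word n i = s_{β_1} ∘ ⋯ ∘ s_{β_i}`, acting on the root space of `D_n`. -/
def word (n : ℕ) : ℕ → (Fin n → ℝ) → (Fin n → ℝ)
  | 0 => id
  | i+1 => word n i ∘ sRefl (beta n (i+1))

/-- The positive roots `γ_i = s_{β_1} ⋯ s_{β_{i-1}}(β_i)`. -/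
def gammaRoot (n i : ℕ) : Fin n → ℝ := word n (i-1) (beta n i)

/-- Coroot pairing `⟨a^∨, b⟩ = 2⟨a,b⟩/⟨a,a⟩`. -/
def cpair {n : ℕ} (a b : Fin n → ℝ) : ℝ := 2 * dot a b / dot a a

end SpinorDn

namespace SpinorDn

/-- `wordRange n a b = s_{β_a} ∘ s_{β_{a+1}} ∘ ⋯ ∘ s_{β_b}`. -/
def wordRange (n a b : ℕ) : (Fin n → ℝ) → (Fin n → ℝ) :=
  ((List.range' a (b + 1 - a)).map (beta n)).foldr (fun β g => sRefl β ∘ g) id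

end SpinorDn

namespace SpinorDn

-- basic dot lemmas
lemma dot_add_left {n : ℕ} (v w β : Fin n → ℝ) : dot (v + w) β = dot v β + dot w β := by
  simp [dot, add_mul, Finset.sum_add_distrib]

lemma dot_smul_left {n : ℕ} (r : ℝ) (v β : Fin n → ℝ) : dot (r • v) β = r * dot v β := by
  simp [dot, Finset.mul_sum, mul_assoc]

lemma dot_sub_left {n : ℕ} (v w β : Fin n → ℝ) : dot (v - w) β = dot v β - dot w β := by
  simp [dot, sub_mul, Finset.sum_sub_distrib]

lemma dot_add_right {n : ℕ} (v w β : Fin n → ℝ) : dot β (v + w) = dot β v + dot β w := by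
  simp [dot, mul_add, Finset.sum_add_distrib]

lemma dot_sub_right {n : ℕ} (v w β : Fin n → ℝ) : dot β (v - w) = dot β v - dot β w := by
  simp [dot, mul_sub, Finset.sum_sub_distrib]

lemma dot_stdE_stdE {n : ℕ} (a b : ℕ) (ha : a < n) :
    dot (stdE a : Fin n → ℝ) (stdE b) = if a = b then 1 else 0 := by
  unfold dot stdE
  rw [Finset.sum_eq_single (⟨a, ha⟩ : Fin n)]
  · simp only []
    by_cases h : a = b <;> simp [h]
  · intro u _ hu
    have : (u : ℕ) ≠ a := by
      intro h; apply hu; exact Fin.ext h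
    simp [this]
  · simp

lemma sRefl_add {n : ℕ} (β v w : Fin n → ℝ) :
    sRefl β (v + w) = sRefl β v + sRefl β w := by
  funext u
  simp only [sRefl, dot_add_left, Pi.add_apply, Pi.sub_apply, Pi.smul_apply, smul_eq_mul]
  ring

lemma sRefl_smul {n : ℕ} (β : Fin n → ℝ) (r : ℝ) (v : Fin n → ℝ) :
    sRefl β (r • v) = r • sRefl β v := by
  funext u
  simp only [sRefl, dot_smul_left, Pi.smul_apply, Pi.sub_apply, smul_eq_mul]
  ring

lemma sRefl_sub {n : ℕ} (β v w : Fin n → ℝ) :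
    sRefl β (v - w) = sRefl β v - sRefl β w := by
  funext u
  simp only [sRefl, dot_sub_left, Pi.sub_apply, Pi.smul_apply, smul_eq_mul]
  ring

lemma sRefl_neg {n : ℕ} (β v : Fin n → ℝ) : sRefl β (-v) = - sRefl β v := by
  have := sRefl_sub β 0 v
  simpa [sRefl_sub, show sRefl β (0: Fin n → ℝ) = 0 from by
    funext u; simp [sRefl, dot, Pi.zero_apply]] using this

-- dot of simple roots
lemma dot_simple_self {n : ℕ} (m : ℕ) (hn : 2 ≤ n) (hm1 : 1 ≤ m) (hmn : m ≤ n) :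
    dot (simpleRoot n m) (simpleRoot n m) = 2 := by
  by_cases h : m < n
  · simp only [simpleRoot, if_pos h]
    rw [dot_sub_left, dot_sub_right, dot_sub_right,
      dot_stdE_stdE _ _ (by omega), dot_stdE_stdE _ _ (by omega),
      dot_stdE_stdE _ _ (by omega), dot_stdE_stdE _ _ (by omega)]
    have h1 : ¬ (m - 1 = m) := by omega
    have h2 : ¬ (m = m - 1) := by omega
    simp [h1, h2]
    norm_num
  · simp only [simpleRoot, if_neg h]
    rw [dot_add_left, dot_add_right, dot_add_right,
      dot_stdE_stdE _ _ (by omega), dot_stdE_stdE _ _ (by omega),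
      dot_stdE_stdE _ _ (by omega), dot_stdE_stdE _ _ (by omega)]
    have h1 : ¬ (n - 2 = n - 1) := by omega
    have h2 : ¬ (n - 1 = n - 2) := by omega
    simp [h1, h2]
    norm_num

lemma sRefl_eq_of_two {n : ℕ} (β v : Fin n → ℝ) (h : dot β β = 2) :
    sRefl β v = v - (dot v β) • β := by
  funext u
  simp only [sRefl, h, Pi.sub_apply, Pi.smul_apply, smul_eq_mul]
  ring

-- action of s_{α_m}, m < n, on basis vectors
lemma sRefl_simple_lt {n : ℕ} (m c : ℕ) (hn : 2 ≤ n) (h1 : 1 ≤ m) (h2 : m < n) (hc : c < n) :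
    sRefl (simpleRoot n m) (stdE c) =
      stdE (if c = m - 1 then m else if c = m then m - 1 else c) := by
  rw [sRefl_eq_of_two _ _ (dot_simple_self m hn h1 (le_of_lt h2))]
  simp only [simpleRoot, if_pos h2]
  rw [dot_sub_right, dot_stdE_stdE _ _ hc, dot_stdE_stdE _ _ hc]
  by_cases e1 : c = m - 1
  · have e2 : ¬ c = m := by omega
    simp only [if_pos e1, if_neg e2, if_pos rfl]
    funext u; simp only [Pi.sub_apply, Pi.smul_apply, Pi.add_apply, smul_eq_mul, stdE]
    by_cases hu : (u:ℕ) = m - 1 <;> by_cases hu2 : (u:ℕ) = m <;>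
      simp [e1, hu, hu2] <;> omega
  · by_cases e2 : c = m
    · simp only [if_neg e1, if_pos e2, if_pos rfl]
      funext u; simp only [Pi.sub_apply, Pi.smul_apply, smul_eq_mul, stdE]
      by_cases hu : (u:ℕ) = m - 1 <;> by_cases hu2 : (u:ℕ) = m <;>
        simp [e2, hu, hu2] <;> omega
    · simp only [if_neg e1, if_neg e2]
      funext u; simp only [Pi.sub_apply, Pi.smul_apply, smul_eq_mul, stdE]
      simp [e1, e2, sub_eq_zero]

-- action of s_{α_n} on basis vectors
lemma sRefl_simple_top {n : ℕ} (c : ℕ) (hn : 2 ≤ n) (hc : c < n) :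
    sRefl (simpleRoot n n) (stdE c) =
      if c = n - 2 then -stdE (n-1) else if c = n - 1 then -stdE (n-2) else stdE c := by
  rw [sRefl_eq_of_two _ _ (dot_simple_self n hn (by omega) le_rfl)]
  simp only [simpleRoot, if_neg (lt_irrefl n)]
  rw [dot_add_right, dot_stdE_stdE _ _ hc, dot_stdE_stdE _ _ hc]
  by_cases e1 : c = n - 2
  · have e2 : ¬ c = n - 1 := by omega
    simp only [if_pos e1, if_neg e2]
    funext u; simp only [Pi.sub_apply, Pi.smul_apply, Pi.add_apply, Pi.neg_apply, smul_eq_mul, stdE]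
    by_cases hu : (u:ℕ) = n - 2 <;> by_cases hu2 : (u:ℕ) = n - 1 <;>
      simp [e1, hu, hu2] <;> omega
  · by_cases e2 : c = n - 1
    · simp only [if_neg e1, if_pos e2]
      funext u; simp only [Pi.sub_apply, Pi.smul_apply, Pi.add_apply, Pi.neg_apply, smul_eq_mul, stdE]
      by_cases hu : (u:ℕ) = n - 2 <;> by_cases hu2 : (u:ℕ) = n - 1 <;>
        simp [e2, hu, hu2] <;> omega
    · simp only [if_neg e1, if_neg e2]
      funext u; simp only [Pi.sub_apply, Pi.smul_apply, Pi.add_apply, smul_eq_mul, stdE]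
      simp [e1, e2, sub_eq_zero]



-- === wordRange structure ===
lemma foldr_comp_base {n : ℕ} (l : List (Fin n → ℝ)) (g0 : (Fin n → ℝ) → (Fin n → ℝ)) :
    l.foldr (fun β g => sRefl β ∘ g) g0 = (l.foldr (fun β g => sRefl β ∘ g) id) ∘ g0 := by
  induction l with
  | nil => rfl
  | cons β t ih => simp only [List.foldr_cons, ih]; rfl

lemma wordRange_empty {n a b : ℕ} (h : b < a) : wordRange n a b = id := by
  have h0 : b + 1 - a = 0 := by omega
  simp [wordRange, h0]

lemma wordRange_split {n : ℕ} (a b c : ℕ) (h1 : a ≤ c + 1) (h2 : c ≤ b) :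
    wordRange n a b = wordRange n a c ∘ wordRange n (c+1) b := by
  unfold wordRange
  have hsplit : List.range' a (b + 1 - a) =
      List.range' a (c + 1 - a) ++ List.range' (c+1) (b - c) := by
    have h := List.range'_append (s := a) (m := c + 1 - a) (n := b - c) (step := 1)
    rw [show a + 1 * (c + 1 - a) = c + 1 by omega] at h
    rw [show (c + 1 - a) + (b - c) = b + 1 - a by omega] at h
    exact h.symm
  rw [hsplit, List.map_append, List.foldr_append, foldr_comp_base,
    show b + 1 - (c+1) = b - c from by omega]

lemma wordRange_single {n a : ℕ} : wordRange n a a = sRefl (beta n a) := by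
  have h1 : a + 1 - a = 1 := by omega
  simp [wordRange, h1, List.range'_one]

lemma wordRange_front {n : ℕ} (a b : ℕ) (h : a ≤ b) :
    wordRange n a b = sRefl (beta n a) ∘ wordRange n (a+1) b := by
  rw [wordRange_split a b a (by omega) h, wordRange_single]

lemma wordRange_add {n a b : ℕ} (v w : Fin n → ℝ) :
    wordRange n a b (v + w) = wordRange n a b v + wordRange n a b w := by
  unfold wordRange
  generalize ((List.range' a (b + 1 - a)).map (beta n)) = l
  induction l with
  | nil => rfl
  | cons β t ih => simp only [List.foldr_cons, Function.comp_apply, ih, sRefl_add]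

lemma wordRange_sub {n a b : ℕ} (v w : Fin n → ℝ) :
    wordRange n a b (v - w) = wordRange n a b v - wordRange n a b w := by
  unfold wordRange
  generalize ((List.range' a (b + 1 - a)).map (beta n)) = l
  induction l with
  | nil => rfl
  | cons β t ih => simp only [List.foldr_cons, Function.comp_apply, ih, sRefl_sub]

lemma wordRange_neg {n a b : ℕ} (v : Fin n → ℝ) :
    wordRange n a b (-v) = - wordRange n a b v := by
  unfold wordRange
  generalize ((List.range' a (b + 1 - a)).map (beta n)) = l
  induction l with
  | nil => rfl
  | cons β t ih => simp only [List.foldr_cons, Function.comp_apply, ih, sRefl_neg]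

-- === aval / kOf / betaIdx ===
lemma aval_one {n : ℕ} : aval n 1 = 0 := by simp [aval]

lemma aval_succ {n k : ℕ} (h1 : 1 ≤ k) (h2 : k ≤ n) :
    aval n (k+1) = aval n k + (n - k) := by
  unfold aval
  have e : k + 1 - 1 = k := by omega
  rw [e]
  have key : k*(2*n-(k+1)) = (k-1)*(2*n-k) + (n-k)*2 := by
    zify [show k ≤ 2*n by omega, show k+1 ≤ 2*n by omega, h1, h2]
    ring
  rw [key, Nat.add_mul_div_right _ _ (by norm_num : 0 < 2)]

lemma aval_le {n : ℕ} (m m' : ℕ) (h1 : 1 ≤ m) (h2 : m ≤ m') (h3 : m' ≤ n) :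
    aval n m ≤ aval n m' := by
  induction m' , h2 using Nat.le_induction with
  | base => exact le_refl _
  | succ m' hm ih =>
    have := aval_succ (show 1 ≤ m' by omega) (show m' ≤ n by omega)
    have := ih (by omega)
    omega

lemma kOf_eq {n k i : ℕ} (hk : 1 ≤ k) (hkn : k + 1 ≤ n)
    (h1 : aval n k < i) (h2 : i ≤ aval n (k+1)) : kOf n i = k := by
  unfold kOf
  have : (Finset.Icc 1 n).filter (fun m => aval n m < i) = Finset.Icc 1 k := by
    ext m
    simp only [Finset.mem_filter, Finset.mem_Icc]
    constructor
    · rintro ⟨⟨hm1, hmn⟩, hlt⟩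
      refine ⟨hm1, ?_⟩
      by_contra hmk
      have : aval n (k+1) ≤ aval n m := aval_le (k+1) m (by omega) (by omega) hmn
      omega
    · rintro ⟨hm1, hmk⟩
      have : aval n m ≤ aval n k := aval_le m k hm1 hmk (by omega)
      exact ⟨⟨hm1, by omega⟩, by omega⟩
  rw [this, Nat.card_Icc]
  omega

lemma jOf_eq {n k p : ℕ} (hk : 1 ≤ k) (hkn : k + 1 ≤ n) (hp1 : 1 ≤ p) (hp2 : p ≤ n - k) :
    jOf n (aval n k + p) = p := by
  unfold jOf
  have hko : kOf n (aval n k + p) = k :=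
    kOf_eq hk hkn (by omega) (by rw [aval_succ hk (by omega)]; omega)
  rw [hko]
  omega

lemma betaIdx_ge2 {n k p : ℕ} (hk : 1 ≤ k) (hkn : k + 1 ≤ n) (hp1 : 2 ≤ p) (hp2 : p ≤ n - k) :
    betaIdx n (aval n k + p) = n - p := by
  unfold betaIdx
  rw [jOf_eq hk hkn (by omega) hp2, if_pos hp1]

lemma betaIdx_one_odd {n k : ℕ} (hk : 1 ≤ k) (hkn : k + 1 ≤ n) (hpar : (n - k) % 2 = 1) :
    betaIdx n (aval n k + 1) = n := by
  unfold betaIdx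
  have hj := jOf_eq hk hkn (le_refl 1) (by omega)
  have hko : kOf n (aval n k + 1) = k :=
    kOf_eq hk hkn (by omega) (by rw [aval_succ hk (by omega)]; omega)
  rw [hj, hko, if_neg (by omega), if_pos hpar]

lemma betaIdx_one_even {n k : ℕ} (hk : 1 ≤ k) (hkn : k + 1 ≤ n) (hpar : (n - k) % 2 = 0) :
    betaIdx n (aval n k + 1) = n - 1 := by
  unfold betaIdx
  have hj := jOf_eq hk hkn (le_refl 1) (by omega)
  have hko : kOf n (aval n k + 1) = k :=
    kOf_eq hk hkn (by omega) (by rw [aval_succ hk (by omega)]; omega)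
  rw [hj, hko, if_neg (by omega), if_neg (by omega)]


-- === the swap-chain lemma ===
lemma chainSeg {n : ℕ} (m r : ℕ) (hn : 2 ≤ n) (hm1 : 1 ≤ m) (hm2 : m + 1 ≤ n) (hr : r ≤ n - m) :
    ∀ d q c, q + d = r + 1 → 2 ≤ q → c < n →
    wordRange n (aval n m + q) (aval n m + r) (stdE c) =
      stdE (if c = n - r - 1 then n - q else if n - r ≤ c ∧ c ≤ n - q then c - 1 else c) := by
  intro d
  induction d with
  | zero =>
    intro q c hq h2 hc
    rw [wordRange_empty (by omega)]
    simp only [id_eq]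
    exact congrArg (stdE (n:=n)) (by split_ifs <;> omega)
  | succ d ih =>
    intro q c hq h2 hc
    have hqr : q ≤ r := by omega
    rw [wordRange_front _ _ (by omega)]
    simp only [Function.comp_apply]
    rw [show aval n m + q + 1 = aval n m + (q+1) from by omega]
    rw [ih (q+1) c (by omega) (by omega) hc]
    have hbeta : beta n (aval n m + q) = simpleRoot n (n - q) := by
      unfold beta
      rw [betaIdx_ge2 hm1 hm2 h2 (by omega)]
    rw [hbeta]
    rw [sRefl_simple_lt (n-q) _ hn (by omega) (by omega) (by split_ifs <;> omega)]
    exact congrArg (stdE (n:=n)) (by split_ifs <;> omega)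

-- === full row m (2 ≤ m ≤ n-2 area) on a basis vector with m ≤ c ≤ n-2 ===
lemma rowFullE {n m c : ℕ} (hn : 2 ≤ n) (hm1 : 1 ≤ m) (hm2 : m ≤ n - 2)
    (hc1 : m ≤ c) (hc2 : c ≤ n - 2) :
    wordRange n (aval n m + 1) (aval n m + (n - m)) (stdE c) = stdE (c - 1) := by
  have hnm : 2 ≤ n - m := by omega
  rw [wordRange_front _ _ (by omega)]
  simp only [Function.comp_apply]
  rw [show aval n m + 1 + 1 = aval n m + 2 from by omega]
  rw [chainSeg m (n-m) hn hm1 (by omega) (le_refl _) (n-m-1) 2 c (by omega) (by omega) (by omega)]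
  rw [if_neg (by omega), if_pos (by omega)]
  by_cases hp : (n - m) % 2 = 1
  · have hb : beta n (aval n m + 1) = simpleRoot n n := by
      unfold beta; rw [betaIdx_one_odd hm1 (by omega) hp]
    rw [hb, sRefl_simple_top (c-1) hn (by omega), if_neg (by omega), if_neg (by omega)]
  · have hb : beta n (aval n m + 1) = simpleRoot n (n-1) := by
      unfold beta; rw [betaIdx_one_even hm1 (by omega) (by omega)]
    rw [hb, sRefl_simple_lt (n-1) (c-1) hn (by omega) (by omega) (by omega)]
    exact congrArg (stdE (n:=n)) (by split_ifs <;> omega)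

lemma rowFull {n m a b : ℕ} (hn : 2 ≤ n) (hm1 : 1 ≤ m) (hm2 : m ≤ n - 2)
    (ha1 : m ≤ a) (ha2 : a ≤ n - 2) (hb1 : m ≤ b) (hb2 : b ≤ n - 2) :
    wordRange n (aval n m + 1) (aval n m + (n - m)) (stdE a + stdE b) =
      stdE (a - 1) + stdE (b - 1) := by
  rw [wordRange_add, rowFullE hn hm1 hm2 ha1 ha2, rowFullE hn hm1 hm2 hb1 hb2]


-- === convenient wrappers ===
lemma chainSeg_move {n : ℕ} (m r d q c : ℕ) (hn : 2 ≤ n) (hm1 : 1 ≤ m) (hm2 : m + 1 ≤ n)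
    (hr : r ≤ n - m) (hq : q + d = r + 1) (h2 : 2 ≤ q) (hc : c < n)
    (hc1 : n - r ≤ c) (hc2 : c ≤ n - q) :
    wordRange n (aval n m + q) (aval n m + r) (stdE c) = stdE (c - 1) := by
  rw [chainSeg m r hn hm1 hm2 hr d q c hq h2 hc]
  exact congrArg (stdE (n:=n)) (by split_ifs <;> omega)

lemma chainSeg_top {n : ℕ} (m r d q c : ℕ) (hn : 2 ≤ n) (hm1 : 1 ≤ m) (hm2 : m + 1 ≤ n)
    (hr : r ≤ n - m) (hq : q + d = r + 1) (h2 : 2 ≤ q) (hc : c < n)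
    (he : c = n - r - 1) :
    wordRange n (aval n m + q) (aval n m + r) (stdE c) = stdE (n - q) := by
  rw [chainSeg m r hn hm1 hm2 hr d q c hq h2 hc]
  exact congrArg (stdE (n:=n)) (by split_ifs <;> omega)

lemma chainSeg_fix {n : ℕ} (m r d q c : ℕ) (hn : 2 ≤ n) (hm1 : 1 ≤ m) (hm2 : m + 1 ≤ n)
    (hr : r ≤ n - m) (hq : q + d = r + 1) (h2 : 2 ≤ q) (hc : c < n)
    (he : c < n - r - 1 ∨ n - q < c) :
    wordRange n (aval n m + q) (aval n m + r) (stdE c) = stdE c := by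
  rw [chainSeg m r hn hm1 hm2 hr d q c hq h2 hc]
  exact congrArg (stdE (n:=n)) (by split_ifs <;> omega)

lemma sRefl_lt_fix {n : ℕ} {m c : ℕ} (hn : 2 ≤ n) (h1 : 1 ≤ m) (h2 : m < n) (hc : c < n)
    (e1 : c ≠ m - 1) (e2 : c ≠ m) : sRefl (simpleRoot n m) (stdE c) = stdE c := by
  rw [sRefl_simple_lt m c hn h1 h2 hc, if_neg e1, if_neg e2]

lemma sRefl_lt_up {n : ℕ} {m c : ℕ} (hn : 2 ≤ n) (h1 : 1 ≤ m) (h2 : m < n) (hc : c < n)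
    (e : c = m - 1) : sRefl (simpleRoot n m) (stdE c) = stdE m := by
  rw [sRefl_simple_lt m c hn h1 h2 hc, if_pos e]

lemma sRefl_lt_down {n : ℕ} {m c : ℕ} (hn : 2 ≤ n) (h1 : 1 ≤ m) (h2 : m < n) (hc : c < n)
    (e : c = m) : sRefl (simpleRoot n m) (stdE c) = stdE (m - 1) := by
  rw [sRefl_simple_lt m c hn h1 h2 hc, if_neg (by omega), if_pos e]

lemma sRefl_top_fix {n : ℕ} {c : ℕ} (hn : 2 ≤ n) (hc : c < n)
    (e1 : c ≠ n - 2) (e2 : c ≠ n - 1) : sRefl (simpleRoot n n) (stdE c) = stdE c := by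
  rw [sRefl_simple_top c hn hc, if_neg e1, if_neg e2]

lemma sRefl_top_a {n : ℕ} {c : ℕ} (hn : 2 ≤ n) (hc : c < n)
    (e : c = n - 2) : sRefl (simpleRoot n n) (stdE c) = -stdE (n - 1) := by
  rw [sRefl_simple_top c hn hc, if_pos e]

lemma sRefl_top_b {n : ℕ} {c : ℕ} (hn : 2 ≤ n) (hc : c < n)
    (e1 : c = n - 1) (e2 : c ≠ n - 2) : sRefl (simpleRoot n n) (stdE c) = -stdE (n - 2) := by
  rw [sRefl_simple_top c hn hc, if_neg e2, if_pos e1]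

-- === stage A : within row k ===
lemma stageA_odd {n k j : ℕ} (hn : 2 ≤ n) (hk1 : 1 ≤ k) (hk : k ≤ n - 1)
    (hj1 : 1 ≤ j) (hj : j ≤ n - k) (hpar : (n - k) % 2 = 1) :
    wordRange n (aval n k + 1) (aval n k + j - 1) (beta n (aval n k + j)) =
      stdE (n - j - 1) + stdE (n - 1) := by
  rcases eq_or_lt_of_le hj1 with h1 | hj2
  · have hj' : j = 1 := h1.symm
    subst hj'
    rw [wordRange_empty (by omega)]
    simp only [id_eq]
    have hb : beta n (aval n k + 1) = simpleRoot n n := by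
      unfold beta; rw [betaIdx_one_odd hk1 (by omega) hpar]
    rw [hb]
    simp only [simpleRoot, if_neg (lt_irrefl n)]
    rw [show n - 1 - 1 = n - 2 from by omega]
  · have hb : beta n (aval n k + j) = simpleRoot n (n - j) := by
      unfold beta; rw [betaIdx_ge2 hk1 (by omega) hj2 hj]
    rw [hb]
    rw [show (simpleRoot n (n-j) : Fin n → ℝ) = stdE (n - j - 1) - stdE (n - j) from by
      simp only [simpleRoot, if_pos (show n - j < n from by omega)]]
    rw [show aval n k + j - 1 = aval n k + (j - 1) from by omega]
    rw [wordRange_front _ _ (by omega)]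
    simp only [Function.comp_apply]
    rw [show aval n k + 1 + 1 = aval n k + 2 from by omega]
    rw [wordRange_sub]
    rw [chainSeg_fix k (j-1) (j-2) 2 (n-j-1) hn hk1 (by omega) (by omega) (by omega)
      (by omega) (by omega) (by omega)]
    rw [chainSeg_top k (j-1) (j-2) 2 (n-j) hn hk1 (by omega) (by omega) (by omega)
      (by omega) (by omega) (by omega)]
    have hb1 : beta n (aval n k + 1) = simpleRoot n n := by
      unfold beta; rw [betaIdx_one_odd hk1 (by omega) hpar]
    rw [hb1, sRefl_sub,
      sRefl_top_fix hn (by omega) (by omega) (by omega),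
      sRefl_top_a hn (by omega) (by omega : n - 2 = n - 2)]
    rw [sub_neg_eq_add]

lemma stageA_even {n k j : ℕ} (hn : 2 ≤ n) (hk1 : 1 ≤ k) (hk : k ≤ n - 1)
    (hj1 : 1 ≤ j) (hj : j ≤ n - k) (hpar : (n - k) % 2 = 0) :
    wordRange n (aval n k + 1) (aval n k + j - 1) (beta n (aval n k + j)) =
      stdE (n - j - 1) - stdE (n - 1) := by
  rcases eq_or_lt_of_le hj1 with h1 | hj2
  · have hj' : j = 1 := h1.symm
    subst hj'
    rw [wordRange_empty (by omega)]
    simp only [id_eq]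
    have hb : beta n (aval n k + 1) = simpleRoot n (n - 1) := by
      unfold beta; rw [betaIdx_one_even hk1 (by omega) hpar]
    rw [hb]
    simp only [simpleRoot, if_pos (show n - 1 < n from by omega)]
  · have hb : beta n (aval n k + j) = simpleRoot n (n - j) := by
      unfold beta; rw [betaIdx_ge2 hk1 (by omega) hj2 hj]
    rw [hb]
    rw [show (simpleRoot n (n-j) : Fin n → ℝ) = stdE (n - j - 1) - stdE (n - j) from by
      simp only [simpleRoot, if_pos (show n - j < n from by omega)]]
    rw [show aval n k + j - 1 = aval n k + (j - 1) from by omega]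
    rw [wordRange_front _ _ (by omega)]
    simp only [Function.comp_apply]
    rw [show aval n k + 1 + 1 = aval n k + 2 from by omega]
    rw [wordRange_sub]
    rw [chainSeg_fix k (j-1) (j-2) 2 (n-j-1) hn hk1 (by omega) (by omega) (by omega)
      (by omega) (by omega) (by omega)]
    rw [chainSeg_top k (j-1) (j-2) 2 (n-j) hn hk1 (by omega) (by omega) (by omega)
      (by omega) (by omega) (by omega)]
    have hb1 : beta n (aval n k + 1) = simpleRoot n (n - 1) := by
      unfold beta; rw [betaIdx_one_even hk1 (by omega) hpar]
    rw [hb1, sRefl_sub,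
      sRefl_lt_fix hn (by omega) (by omega) (by omega) (by omega) (by omega),
      sRefl_lt_up hn (by omega) (by omega) (by omega) (by omega : n - 2 = n - 1 - 1)]

-- === first full row (row k-1), input has a ± e_{n-1} component ===
lemma rowFirst_even {n m a : ℕ} (hn : 2 ≤ n) (hm1 : 1 ≤ m) (hm2 : m ≤ n - 2)
    (ha1 : m ≤ a) (ha2 : a ≤ n - 2) (hpar : (n - m) % 2 = 0) :
    wordRange n (aval n m + 1) (aval n m + (n - m)) (stdE a + stdE (n-1)) =
      stdE (a - 1) + stdE (n - 2) := by
  rw [wordRange_front _ _ (by omega)]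
  simp only [Function.comp_apply]
  rw [show aval n m + 1 + 1 = aval n m + 2 from by omega]
  rw [wordRange_add]
  rw [chainSeg_move m (n-m) (n-m-1) 2 a hn hm1 (by omega) (le_refl _) (by omega) (by omega)
    (by omega) (by omega) (by omega)]
  rw [chainSeg_fix m (n-m) (n-m-1) 2 (n-1) hn hm1 (by omega) (le_refl _) (by omega) (by omega)
    (by omega) (by omega)]
  have hb : beta n (aval n m + 1) = simpleRoot n (n - 1) := by
    unfold beta; rw [betaIdx_one_even hm1 (by omega) hpar]
  rw [hb, sRefl_add,
    sRefl_lt_fix hn (by omega) (by omega) (by omega) (by omega) (by omega),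
    sRefl_lt_down hn (by omega) (by omega) (by omega) rfl]
  rw [show n - 1 - 1 = n - 2 from by omega]

lemma rowFirst_odd {n m a : ℕ} (hn : 2 ≤ n) (hm1 : 1 ≤ m) (hm2 : m ≤ n - 2)
    (ha1 : m ≤ a) (ha2 : a ≤ n - 2) (hpar : (n - m) % 2 = 1) :
    wordRange n (aval n m + 1) (aval n m + (n - m)) (stdE a - stdE (n-1)) =
      stdE (a - 1) + stdE (n - 2) := by
  rw [wordRange_front _ _ (by omega)]
  simp only [Function.comp_apply]
  rw [show aval n m + 1 + 1 = aval n m + 2 from by omega]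
  rw [wordRange_sub]
  rw [chainSeg_move m (n-m) (n-m-1) 2 a hn hm1 (by omega) (le_refl _) (by omega) (by omega)
    (by omega) (by omega) (by omega)]
  rw [chainSeg_fix m (n-m) (n-m-1) 2 (n-1) hn hm1 (by omega) (le_refl _) (by omega) (by omega)
    (by omega) (by omega)]
  have hb : beta n (aval n m + 1) = simpleRoot n n := by
    unfold beta; rw [betaIdx_one_odd hm1 (by omega) hpar]
  rw [hb, sRefl_sub,
    sRefl_top_fix hn (by omega) (by omega) (by omega),
    sRefl_top_b hn (by omega) rfl (by omega)]
  rw [sub_neg_eq_add]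

-- === rows k-1 down to 2 ===
lemma middle {n k j : ℕ} (hn : 2 ≤ n) (hk : 3 ≤ k) (hkn : k ≤ n - 1)
    (hj1 : 1 ≤ j) (hj : j ≤ n - k) :
    ∀ d, d ≤ k - 3 →
    wordRange n (aval n (k-1-d) + 1) (aval n k + j - 1) (beta n (aval n k + j)) =
      stdE (n - j - 2 - d) + stdE (n - 2 - d) := by
  intro d
  induction d with
  | zero =>
    intro _
    simp only [Nat.sub_zero]
    rw [wordRange_split (n := n) (aval n (k-1) + 1) (aval n k + j - 1) (aval n k)
      (by have := aval_le (n := n) (k-1) k (by omega) (by omega) (by omega); omega) (by omega)]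
    simp only [Function.comp_apply]
    have hsa : aval n k = aval n (k-1) + (n - (k-1)) := by
      have h := aval_succ (n := n) (k := k-1) (by omega) (by omega)
      rw [show k - 1 + 1 = k from by omega] at h
      exact h
    by_cases hpar : (n - k) % 2 = 1
    · rw [stageA_odd hn (by omega) hkn hj1 hj hpar]
      rw [hsa]
      rw [rowFirst_even hn (by omega) (by omega) (by omega) (by omega) (by omega)]
      rw [show n - j - 1 - 1 = n - j - 2 from by omega]
    · rw [stageA_even hn (by omega) hkn hj1 hj (by omega)]
      rw [hsa]
      rw [rowFirst_odd hn (by omega) (by omega) (by omega) (by omega) (by omega)]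
      rw [show n - j - 1 - 1 = n - j - 2 from by omega]
  | succ d ih =>
    intro hd
    rw [wordRange_split (n := n) (aval n (k-1-(d+1)) + 1) (aval n k + j - 1) (aval n (k-1-d))
      (by have := aval_le (n := n) (k-1-(d+1)) (k-1-d) (by omega) (by omega) (by omega); omega)
      (by have := aval_le (n := n) (k-1-d) k (by omega) (by omega) (by omega); omega)]
    simp only [Function.comp_apply]
    rw [ih (by omega)]
    have hsa : aval n (k-1-d) = aval n (k-1-(d+1)) + (n - (k-1-(d+1))) := by
      have h := aval_succ (n := n) (k := k-1-(d+1)) (by omega) (by omega)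
      rw [show k - 1 - (d+1) + 1 = k - 1 - d from by omega] at h
      exact h
    rw [hsa]
    rw [rowFull hn (by omega) (by omega) (by omega) (by omega) (by omega) (by omega)]
    rw [show n - j - 2 - d - 1 = n - j - 2 - (d+1) from by omega,
      show n - 2 - d - 1 = n - 2 - (d+1) from by omega]

-- === telescoping sums of simple roots ===
lemma sum_simple {n : ℕ} (hn : 1 ≤ n) (a b : ℕ) (ha : 1 ≤ a) (hab : a ≤ b) :
    b ≤ n - 1 → (∑ u ∈ Finset.Icc a b, simpleRoot n u) = stdE (a-1) - stdE b := by
  induction b, hab using Nat.le_induction with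
  | base =>
    intro hb
    rw [Finset.Icc_self, Finset.sum_singleton]
    simp only [simpleRoot, if_pos (show a < n from by omega)]
  | succ b hab ih =>
    intro hb
    rw [Finset.sum_Icc_succ_top (by omega : a ≤ b + 1), ih (by omega)]
    simp only [simpleRoot, if_pos (show b + 1 < n from by omega)]
    rw [show b + 1 - 1 = b from by omega]
    abel

lemma aval_two {n : ℕ} (hn : 1 ≤ n) : aval n 2 = n - 1 := by
  have h := aval_succ (k := 1) (n := n) (le_refl 1) hn
  rw [aval_one] at h
  simpa using h


end SpinorDn

open SpinorDn Finset in
/-- For `k ≥ 2` and `j ∈ [1, n-k]`, with `i = a_k + j`, the element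
`s_{β_{k-1}} s_{β_k} ⋯ s_{β_{i-1}}(β_i)` equals the positive root
`Σ_{u=n-k-j+1}^{n-k} α_u + 2 Σ_{u=n-k+1}^{n-2} α_u + α_{n-1} + α_n`
(the middle sum being empty when `k = 2`). -/
theorem stmt_6 (n k j i : ℕ) (hn : 2 ≤ n) (hk2 : 2 ≤ k) (hk : k ≤ n - 1)
    (hj1 : 1 ≤ j) (hj : j ≤ n - k) (hi : i = aval n k + j) :
    wordRange n (k-1) (i-1) (beta n i) =
      (∑ u ∈ Finset.Icc (n-k-j+1) (n-k), simpleRoot n u)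
        + (2 : ℝ) • (∑ u ∈ Finset.Icc (n-k+1) (n-2), simpleRoot n u)
        + simpleRoot n (n-1) + simpleRoot n n := by
  subst hi
  have hn3 : 3 ≤ n := by omega
  have ha2 : aval n 2 = n - 1 := aval_two (by omega)
  have hS1 : (∑ u ∈ Finset.Icc (n-k-j+1) (n-k), simpleRoot n u) = stdE (n-k-j) - stdE (n-k) := by
    have h := sum_simple (n := n) (by omega) (n-k-j+1) (n-k) (by omega) (by omega) (by omega)
    rw [show n-k-j+1-1 = n-k-j from by omega] at h
    exact h
  have hS3 : (simpleRoot n (n-1) : Fin n → ℝ) = stdE (n-2) - stdE (n-1) := by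
    simp only [simpleRoot, if_pos (show n-1 < n from by omega)]
    rw [show n-1-1 = n-2 from by omega]
  have hS4 : (simpleRoot n n : Fin n → ℝ) = stdE (n-2) + stdE (n-1) := by
    simp only [simpleRoot, if_neg (lt_irrefl n)]
  rcases eq_or_lt_of_le hk2 with hk2' | hk3
  · -- k = 2
    have hk' : k = 2 := hk2'.symm
    subst hk'
    have hS2 : (∑ u ∈ Finset.Icc (n-2+1) (n-2), simpleRoot n u) = (0 : Fin n → ℝ) := by
      rw [Finset.Icc_eq_empty (by omega), Finset.sum_empty]
    rw [hS1, hS2, hS3, hS4]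
    rw [show (2:ℕ) - 1 = 1 from by norm_num]
    rw [wordRange_split (n := n) 1 (aval n 2 + j - 1) (n-1) (by omega) (by omega)]
    simp only [Function.comp_apply]
    rw [show n - 1 + 1 = aval n 2 + 1 from by rw [ha2]]
    by_cases hpar : (n - 2) % 2 = 1
    · rw [stageA_odd hn (by omega) (by omega) hj1 hj hpar]
      rw [wordRange_front 1 (n-1) (by omega)]
      simp only [Function.comp_apply]
      rw [wordRange_add]
      have hcA : wordRange n 2 (n-1) (stdE (n-j-1) : Fin n → ℝ) = stdE (n-j-2) := by
        have h := chainSeg_move (n := n) 1 (n-1) (n-2) 2 (n-j-1) hn (le_refl 1) (by omega)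
          (by omega) (by omega) (by omega) (by omega) (by omega) (by omega)
        rw [aval_one, show n-j-1-1 = n-j-2 from by omega] at h
        simpa using h
      have hcB : wordRange n 2 (n-1) (stdE (n-1) : Fin n → ℝ) = stdE (n-1) := by
        have h := chainSeg_fix (n := n) 1 (n-1) (n-2) 2 (n-1) hn (le_refl 1) (by omega)
          (by omega) (by omega) (by omega) (by omega) (by omega)
        rw [aval_one] at h
        simpa using h
      rw [hcA, hcB]
      have hb1 : betaIdx n (aval n 1 + 1) = n - 1 :=
        betaIdx_one_even (k := 1) (n := n) (le_refl 1) (by omega) (by omega)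
      rw [aval_one] at hb1
      norm_num at hb1
      have hb : beta n 1 = simpleRoot n (n-1) := by
        unfold beta; rw [hb1]
      rw [hb, sRefl_add,
        sRefl_lt_fix hn (by omega) (by omega) (by omega) (by omega) (by omega),
        sRefl_lt_down hn (by omega) (by omega) (by omega) rfl]
      rw [show n-1-1 = n-2 from by omega, show n-j-2 = n-2-j from by omega]
      rw [smul_zero]
      abel
    · rw [stageA_even hn (by omega) (by omega) hj1 hj (by omega)]
      rw [wordRange_front 1 (n-1) (by omega)]
      simp only [Function.comp_apply]
      rw [wordRange_sub]
      have hcA : wordRange n 2 (n-1) (stdE (n-j-1) : Fin n → ℝ) = stdE (n-j-2) := by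
        have h := chainSeg_move (n := n) 1 (n-1) (n-2) 2 (n-j-1) hn (le_refl 1) (by omega)
          (by omega) (by omega) (by omega) (by omega) (by omega) (by omega)
        rw [aval_one, show n-j-1-1 = n-j-2 from by omega] at h
        simpa using h
      have hcB : wordRange n 2 (n-1) (stdE (n-1) : Fin n → ℝ) = stdE (n-1) := by
        have h := chainSeg_fix (n := n) 1 (n-1) (n-2) 2 (n-1) hn (le_refl 1) (by omega)
          (by omega) (by omega) (by omega) (by omega) (by omega)
        rw [aval_one] at h
        simpa using h
      rw [hcA, hcB]
      have hb1 : betaIdx n (aval n 1 + 1) = n :=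
        betaIdx_one_odd (k := 1) (n := n) (le_refl 1) (by omega) (by omega)
      rw [aval_one] at hb1
      norm_num at hb1
      have hb : beta n 1 = simpleRoot n n := by
        unfold beta; rw [hb1]
      rw [hb, sRefl_sub,
        sRefl_top_fix hn (by omega) (by omega) (by omega),
        sRefl_top_b hn (by omega) rfl (by omega)]
      rw [sub_neg_eq_add]
      rw [show n-j-2 = n-2-j from by omega]
      rw [smul_zero]
      abel
  · -- 3 ≤ k
    have hS2 : (∑ u ∈ Finset.Icc (n-k+1) (n-2), simpleRoot n u) = stdE (n-k) - stdE (n-2) := by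
      have h := sum_simple (n := n) (by omega) (n-k+1) (n-2) (by omega) (by omega) (by omega)
      rw [show n-k+1-1 = n-k from by omega] at h
      exact h
    rw [hS1, hS2, hS3, hS4]
    have havk : n - 1 ≤ aval n k := by
      have h := aval_le (n := n) 2 k (by omega) (by omega) (by omega)
      omega
    rw [wordRange_split (n := n) (k-1) (aval n k + j - 1) (n-1) (by omega) (by omega)]
    simp only [Function.comp_apply]
    have hmid := middle (n := n) (k := k) (j := j) hn (by omega) hk hj1 hj (k-3) (le_refl _)
    rw [show k - 1 - (k-3) = 2 from by omega, ha2,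
      show n - j - 2 - (k-3) = n - k - j + 1 from by omega,
      show n - 2 - (k-3) = n - k + 1 from by omega] at hmid
    rw [hmid]
    rw [wordRange_add]
    have hcA : wordRange n (k-1) (n-1) (stdE (n-k-j+1) : Fin n → ℝ) = stdE (n-k-j) := by
      have h := chainSeg_move (n := n) 1 (n-1) (n-k+1) (k-1) (n-k-j+1) hn (le_refl 1)
        (by omega) (by omega) (by omega) (by omega) (by omega) (by omega) (by omega)
      rw [aval_one, show n-k-j+1-1 = n-k-j from by omega] at h
      simpa using h
    have hcB : wordRange n (k-1) (n-1) (stdE (n-k+1) : Fin n → ℝ) = stdE (n-k) := by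
      have h := chainSeg_move (n := n) 1 (n-1) (n-k+1) (k-1) (n-k+1) hn (le_refl 1)
        (by omega) (by omega) (by omega) (by omega) (by omega) (by omega) (by omega)
      rw [aval_one, show n-k+1-1 = n-k from by omega] at h
      simpa using h
    rw [hcA, hcB, two_smul]
    abel


end
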